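/- Let n be an even positive integer and define κ : (0,n) → ℝ by κ(x) = ∑_{k=1}^{n/2−1} (2/k) cos(2πxk/n) + (2/n) cos(πx). Then κ'(x) = (2π/n)(cos(πx) − 1)·cot(πx/n); in particular κ'(x) ≤ 0 on (0, n/2) and κ'(x) ≥ 0 on (n/2, n), so κ has a global minimum at x = n/2. -/

import Mathlib

open Real

lemma sinsum (t : ℝ) : ∀ m : ℕ,
    Real.sin t * ∑ k ∈ Finset.Icc 1 m, Real.sin (2 * k * t)
      = Real.sin ((m + 1) * t) * Real.sin (m * t) := by
  intro m
  induction m with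
  | zero => simp
  | succ m ih =>
    rw [Finset.sum_Icc_succ_top (by omega), mul_add, ih]
    push_cast
    have h1 : ((m : ℝ) + 1 + 1) * t = ((m : ℝ) + 1) * t + t := by ring
    have h2 : (m : ℝ) * t = ((m : ℝ) + 1) * t - t := by ring
    have h3 : 2 * ((m : ℝ) + 1) * t = 2 * (((m : ℝ) + 1) * t) := by ring
    rw [h1, h2, h3, Real.sin_add, Real.sin_sub, Real.sin_two_mul]
    ring

lemma kderiv (n : ℕ) (hn : 0 < n) (x : ℝ) :
    HasDerivAt (fun x : ℝ =>
      (∑ k ∈ Finset.Icc 1 (n / 2 - 1), (2 / (k : ℝ)) * Real.cos (2 * π * x * k / n)) +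
        (2 / n) * Real.cos (π * x))
      (-(4 * π / n) * (∑ k ∈ Finset.Icc 1 (n / 2 - 1), Real.sin (2 * π * x * k / n))
        - (2 * π / n) * Real.sin (π * x)) x := by
  have hsum : HasDerivAt (fun x : ℝ =>
      ∑ k ∈ Finset.Icc 1 (n / 2 - 1), (2 / (k : ℝ)) * Real.cos (2 * π * x * k / n))
      (∑ k ∈ Finset.Icc 1 (n / 2 - 1), -(4 * π / n) * Real.sin (2 * π * x * k / n)) x := by
    apply HasDerivAt.fun_sum
    intro k hk
    have hk1 : (1 : ℕ) ≤ k := (Finset.mem_Icc.mp hk).1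
    have hk0 : (k : ℝ) ≠ 0 := Nat.cast_ne_zero.mpr (by omega)
    have hn0 : (n : ℝ) ≠ 0 := Nat.cast_ne_zero.mpr hn.ne'
    have hin : HasDerivAt (fun y : ℝ => 2 * π * y * (k : ℝ) / n) (2 * π * (k : ℝ) / n) x := by
      have h := (hasDerivAt_id x).const_mul (2 * π * (k : ℝ) / n)
      have he : (fun y : ℝ => 2 * π * y * (k : ℝ) / n) = fun y => 2 * π * (k : ℝ) / n * y := by
        funext y; ring
      rw [he]; simpa using h
    have h2 := (hin.cos).const_mul (2 / (k : ℝ))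
    refine h2.congr_deriv ?_
    field_simp
    ring
  have hlast : HasDerivAt (fun x : ℝ => (2 / n) * Real.cos (π * x))
      (-(2 * π / n) * Real.sin (π * x)) x := by
    have hin : HasDerivAt (fun y : ℝ => π * y) π x := by
      simpa using (hasDerivAt_id x).const_mul π
    have h2 := (hin.cos).const_mul (2 / (n : ℝ))
    refine h2.congr_deriv ?_
    ring
  have := hsum.add hlast
  refine this.congr_deriv ?_
  rw [← Finset.mul_sum]
  ring

open Real in
theorem kappa_deriv_and_min (n : ℕ) (hn : 0 < n) (heven : Even n) :
    let κ : ℝ → ℝ := fun x =>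
      (∑ k ∈ Finset.Icc 1 (n / 2 - 1), (2 / (k : ℝ)) * Real.cos (2 * π * x * k / n)) +
        (2 / n) * Real.cos (π * x)
    (∀ x ∈ Set.Ioo (0 : ℝ) (n : ℝ), deriv κ x =
        (2 * π / n) * (Real.cos (π * x) - 1) * (Real.cos (π * x / n) / Real.sin (π * x / n))) ∧
    (∀ x ∈ Set.Ioo (0 : ℝ) ((n : ℝ) / 2), deriv κ x ≤ 0) ∧
    (∀ x ∈ Set.Ioo ((n : ℝ) / 2) (n : ℝ), 0 ≤ deriv κ x) ∧
    (∀ x ∈ Set.Ioo (0 : ℝ) (n : ℝ), κ ((n : ℝ) / 2) ≤ κ x) := by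
  intro κ
  obtain ⟨m, rfl⟩ := heven
  have hm : 1 ≤ m := by omega
  have hm2 : (m + m) / 2 = m := by omega
  have hn0 : ((m : ℝ) + m) ≠ 0 := by positivity
  have hnR : ((m + m : ℕ) : ℝ) = 2 * m := by push_cast; ring
  have hmR : (0:ℝ) < m := by exact_mod_cast hm
  -- the derivative formula on Ioo 0 n
  have key : ∀ x ∈ Set.Ioo (0 : ℝ) ((m + m : ℕ) : ℝ), deriv κ x =
      (2 * π / (m + m : ℕ)) * (Real.cos (π * x) - 1) *
        (Real.cos (π * x / (m + m : ℕ)) / Real.sin (π * x / (m + m : ℕ))) := by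
    intro x hx
    obtain ⟨hx0, hxn⟩ := hx
    have hD : deriv κ x = -(4 * π / ((m + m : ℕ) : ℝ)) *
        (∑ k ∈ Finset.Icc 1 ((m + m) / 2 - 1), Real.sin (2 * π * x * k / ((m + m : ℕ) : ℝ)))
        - (2 * π / ((m + m : ℕ) : ℝ)) * Real.sin (π * x) := (kderiv (m + m) (by omega) x).deriv
    rw [hD]
    set t : ℝ := π * x / ((m + m : ℕ) : ℝ) with ht
    have htpos : 0 < t := by
      rw [ht, hnR]; positivity
    have htlt : t < π := by
      rw [ht, hnR]
      rw [div_lt_iff₀ (by positivity)]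
      have := Real.pi_pos
      nlinarith
    have hst : 0 < Real.sin t := Real.sin_pos_of_pos_of_lt_pi htpos htlt
    -- rewrite the sum terms
    have hterm : ∀ k ∈ Finset.Icc 1 ((m+m)/2 - 1),
        Real.sin (2 * π * x * k / (m+m : ℕ)) = Real.sin (2 * k * t) := by
      intro k hk
      congr 1
      rw [ht]; ring
    rw [Finset.sum_congr rfl hterm, hm2]
    have hS := sinsum t (m - 1)
    have hcast : ((m - 1 : ℕ) : ℝ) = (m : ℝ) - 1 := by
      push_cast [Nat.cast_sub hm]; ring
    rw [hcast] at hS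
    have hmt : ((m : ℝ) - 1 + 1) * t = π * x / 2 := by
      rw [ht, hnR]; field_simp; ring
    have hmt2 : ((m : ℝ) - 1) * t = π * x / 2 - t := by
      rw [ht, hnR]; field_simp
    rw [hmt, hmt2] at hS
    -- now pure trig
    have hpx : π * x = 2 * (π * x / 2) := by ring
    rw [hpx, Real.cos_two_mul, Real.sin_two_mul]
    rw [Real.sin_sub] at hS
    have hpy : Real.sin (π * x / 2) ^ 2 = 1 - Real.cos (π * x / 2) ^ 2 := by
      nlinarith [Real.sin_sq_add_cos_sq (π * x / 2)]
    apply mul_right_cancel₀ hst.ne'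
    rw [mul_assoc _ (Real.cos t / Real.sin t) (Real.sin t), div_mul_cancel₀ _ hst.ne']
    linear_combination (-2 * (2 * π / ((m + m : ℕ) : ℝ))) * hS +
      (-2 * (2 * π / ((m + m : ℕ) : ℝ)) * Real.cos t) * hpy
  have hc2 : (((m + m : ℕ) : ℝ)) / 2 = (m : ℝ) := by rw [hnR]; ring
  have part2 : ∀ x ∈ Set.Ioo (0 : ℝ) (((m + m : ℕ) : ℝ) / 2), deriv κ x ≤ 0 := by
    intro x hx
    obtain ⟨hx0, hx2⟩ := hx
    rw [hc2] at hx2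
    have hxm : x < ((m + m : ℕ) : ℝ) := by rw [hnR]; linarith
    rw [key x ⟨hx0, hxm⟩]
    set t : ℝ := π * x / ((m + m : ℕ) : ℝ) with ht
    have htpos : 0 < t := by rw [ht, hnR]; positivity
    have htlt : t < π / 2 := by
      rw [ht, hnR, div_lt_iff₀ (by positivity)]
      have := Real.pi_pos
      nlinarith
    have hst : 0 < Real.sin t := Real.sin_pos_of_pos_of_lt_pi htpos (by linarith [Real.pi_pos])
    have hct : 0 < Real.cos t := Real.cos_pos_of_mem_Ioo ⟨by linarith [Real.pi_pos], htlt⟩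
    have h1 : (0:ℝ) ≤ 2 * π / ((m + m : ℕ) : ℝ) := by
      rw [hnR]; positivity
    have h2 : Real.cos (π * x) - 1 ≤ 0 := by linarith [Real.cos_le_one (π * x)]
    have h3 : 0 ≤ Real.cos t / Real.sin t := div_nonneg hct.le hst.le
    nlinarith [mul_nonneg h1 h3]
  have part3 : ∀ x ∈ Set.Ioo (((m + m : ℕ) : ℝ) / 2) ((m + m : ℕ) : ℝ), 0 ≤ deriv κ x := by
    intro x hx
    obtain ⟨hx2, hxn⟩ := hx
    rw [hc2] at hx2
    have hx0 : (0:ℝ) < x := lt_trans hmR hx2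
    rw [key x ⟨hx0, hxn⟩]
    set t : ℝ := π * x / ((m + m : ℕ) : ℝ) with ht
    have htpos : 0 < t := by rw [ht, hnR]; positivity
    have htlt : t < π := by
      rw [ht, hnR, div_lt_iff₀ (by positivity)]
      rw [hnR] at hxn
      have := Real.pi_pos
      nlinarith
    have htge : π / 2 ≤ t := by
      rw [ht, hnR, le_div_iff₀ (by positivity)]
      have := Real.pi_pos
      nlinarith
    have hst : 0 < Real.sin t := Real.sin_pos_of_pos_of_lt_pi htpos htlt
    have hct : Real.cos t ≤ 0 := Real.cos_nonpos_of_pi_div_two_le_of_le htge (by linarith [Real.pi_pos])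
    have h1 : (0:ℝ) ≤ 2 * π / ((m + m : ℕ) : ℝ) := by
      rw [hnR]; positivity
    have h2 : Real.cos (π * x) - 1 ≤ 0 := by linarith [Real.cos_le_one (π * x)]
    have h3 : Real.cos t / Real.sin t ≤ 0 := div_nonpos_of_nonpos_of_nonneg hct hst.le
    nlinarith [mul_nonneg h1 (neg_nonneg.mpr h3)]
  refine ⟨key, part2, part3, ?_⟩
  intro x hx
  obtain ⟨hx0, hxn⟩ := hx
  have hdiff : Differentiable ℝ κ := fun y => (kderiv (m + m) (by omega) y).differentiableAt
  have hcont : Continuous κ := hdiff.continuous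
  set c : ℝ := ((m + m : ℕ) : ℝ) / 2 with hcdef
  rcases le_or_gt x c with hxc | hxc
  · have hanti := antitoneOn_of_deriv_nonpos (convex_Icc x c) hcont.continuousOn
      (hdiff.differentiableOn) ?_
    · exact hanti (Set.mem_Icc.mpr ⟨le_refl x, hxc⟩) (Set.mem_Icc.mpr ⟨hxc, le_refl c⟩) hxc
    · intro y hy
      rw [interior_Icc] at hy
      exact part2 y ⟨lt_trans hx0 hy.1, hy.2⟩
  · have hmono := monotoneOn_of_deriv_nonneg (convex_Icc c x) hcont.continuousOn
      (hdiff.differentiableOn) ?_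
    · exact hmono (Set.mem_Icc.mpr ⟨le_refl c, hxc.le⟩) (Set.mem_Icc.mpr ⟨hxc.le, le_refl x⟩) hxc.le
    · intro y hy
      rw [interior_Icc] at hy
      exact part3 y ⟨hy.1, lt_trans hy.2 hxn⟩
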